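/- Let H be a complex Hilbert space, A a bounded normal operator on H, and G a countable set of vectors in H such that the family (A^n g), indexed by (g,n) ∈ G × ℕ, is complete in H, and such that for every g ∈ G the family (A^n g)_{n∈ℕ} is Bessel in H. Then the spectrum of A is contained in the closed unit disk { z ∈ ℂ : |z| ≤ 1 }; equivalently, since A is normal, ‖A‖ ≤ 1. -/

import Mathlib

open ContinuousLinearMap
open scoped InnerProductSpace ENNReal

section Aux

variable {H : Type*} [NormedAddCommGroup H] [InnerProductSpace ℂ H] [CompleteSpace H]

/-- `⟪x, (B⋆B) x⟫ = ‖B x‖²`. -/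
lemma aux_inner_star_mul_self (B : H →L[ℂ] H) (x : H) :
    ⟪x, (star B * B) x⟫_ℂ = ((‖B x‖ : ℂ)) ^ 2 := by
  rw [ContinuousLinearMap.mul_apply, ContinuousLinearMap.star_eq_adjoint,
    ContinuousLinearMap.adjoint_inner_right, inner_self_eq_norm_sq_to_K]
  norm_cast

/-- Key lower bound: if `φ` vanishes on `‖z‖ < s`, then
`s ^ N * ‖cfc φ A x‖ ≤ ‖cfc (z ^ N * φ z) A x‖`. -/
lemma aux_key (A : H →L[ℂ] H) [IsStarNormal A] (φ : ℂ → ℂ) (hφc : Continuous φ)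
    (s : ℝ) (hs : 0 ≤ s) (hφ0 : ∀ z : ℂ, ‖z‖ < s → φ z = 0) (N : ℕ) (x : H) :
    s ^ N * ‖cfc φ A x‖ ≤ ‖cfc (fun z : ℂ => z ^ N * φ z) A x‖ := by
  set ψ : ℂ → ℂ := fun z => z ^ N * φ z with hψ_def
  set η : ℂ → ℂ := fun z => ((s : ℂ)) ^ N * φ z with hη_def
  have hψc : Continuous ψ := (continuous_pow N).mul hφc
  have hηc : Continuous η := continuous_const.mul hφc
  have hD : ∀ z : ℂ, ‖η z‖ ≤ ‖ψ z‖ := by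
    intro z
    rcases lt_or_ge ‖z‖ s with h | h
    · simp [hψ_def, hη_def, hφ0 z h]
    · have h1 : ‖((s : ℂ))‖ = s := by
        rw [Complex.norm_real, Real.norm_eq_abs, abs_of_nonneg hs]
      simp only [hψ_def, hη_def, norm_mul, norm_pow, h1]
      exact mul_le_mul_of_nonneg_right (pow_le_pow_left₀ hs h N) (norm_nonneg _)
  set χ : ℂ → ℂ := fun z => ((Real.sqrt (‖ψ z‖ ^ 2 - ‖η z‖ ^ 2) : ℝ) : ℂ) with hχ_def
  have hχc : Continuous χ :=
    Complex.continuous_ofReal.comp (Real.continuous_sqrt.comp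
      (((hψc.norm).pow 2).sub ((hηc.norm).pow 2)))
  have hpt : ∀ z : ℂ, star (ψ z) * ψ z = star (χ z) * χ z + star (η z) * η z := by
    intro z
    have h0 : 0 ≤ ‖ψ z‖ ^ 2 - ‖η z‖ ^ 2 := by
      have := hD z
      nlinarith [norm_nonneg (η z)]
    have hχn : ‖χ z‖ = Real.sqrt (‖ψ z‖ ^ 2 - ‖η z‖ ^ 2) := by
      simp only [hχ_def, Complex.norm_real, Real.norm_eq_abs,
        abs_of_nonneg (Real.sqrt_nonneg _)]
    have hχ2 : ‖χ z‖ ^ 2 = ‖ψ z‖ ^ 2 - ‖η z‖ ^ 2 := by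
      rw [hχn, Real.sq_sqrt h0]
    simp only [RCLike.star_def, RCLike.conj_mul]
    norm_cast
    rw [hχ2]
    ring
  have hmulself : ∀ f : ℂ → ℂ, Continuous f →
      cfc (fun z => star (f z) * f z) A = star (cfc f A) * cfc f A := by
    intro f hf
    rw [cfc_mul _ _ A (hf.star.continuousOn) hf.continuousOn, cfc_star f A]
  have hop : star (cfc ψ A) * cfc ψ A
      = star (cfc χ A) * cfc χ A + star (cfc η A) * cfc η A := by
    rw [← hmulself ψ hψc, ← hmulself χ hχc, ← hmulself η hηc,
      ← cfc_add A (fun z => star (χ z) * χ z) (fun z => star (η z) * η z) ((hχc.star.mul hχc).continuousOn) ((hηc.star.mul hηc).continuousOn)]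
    exact cfc_congr fun z _ => hpt z
  have hx := congrArg (fun B : H →L[ℂ] H => ⟪x, B x⟫_ℂ) hop
  simp only [ContinuousLinearMap.add_apply, inner_add_right,
    aux_inner_star_mul_self] at hx
  have hx' : (‖cfc ψ A x‖ : ℝ) ^ 2
      = ‖cfc χ A x‖ ^ 2 + ‖cfc η A x‖ ^ 2 := by
    exact_mod_cast hx
  have hηA : cfc η A = ((s : ℂ)) ^ N • cfc φ A := by
    rw [hη_def, cfc_const_mul _ _ A hφc.continuousOn]
  have hηx : ‖cfc η A x‖ = s ^ N * ‖cfc φ A x‖ := by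
    rw [hηA]
    simp [norm_smul, abs_of_nonneg hs]
  have h2 : (s ^ N * ‖cfc φ A x‖) ^ 2 ≤ ‖cfc ψ A x‖ ^ 2 := by
    rw [← hηx]
    nlinarith [sq_nonneg ‖cfc χ A x‖, hx']
  have h3 : 0 ≤ s ^ N * ‖cfc φ A x‖ := by positivity
  exact le_of_pow_le_pow_left₀ two_ne_zero (norm_nonneg _) (by simpa using h2)

end Aux

/-- If `A` is a bounded normal operator on a complex Hilbert space `H`, `G` is a countable
set of vectors such that `{A^n g : g ∈ G, n ∈ ℕ}` is complete in `H`, and for every `g ∈ G`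
the system `(A^n g)_{n∈ℕ}` is Bessel, then `σ(A) ⊆ {|z| ≤ 1}`, equivalently `‖A‖ ≤ 1`. -/
theorem stmt_5 {H : Type*} [NormedAddCommGroup H] [InnerProductSpace ℂ H] [CompleteSpace H]
    (A : H →L[ℂ] H) (hA : adjoint A ∘L A = A ∘L adjoint A)
    (G : Set H) (hG : G.Countable)
    (hcomplete :
      (Submodule.span ℂ
        (Set.range fun p : ↥G × ℕ => (A ^ p.2) (p.1 : H))).topologicalClosure = ⊤)
    (hBessel : ∀ g ∈ G, ∃ β : ℝ, 0 < β ∧ ∀ f : H,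
      (∑' n : ℕ, (‖⟪f, (A ^ n) g⟫_ℂ‖₊ : ℝ≥0∞) ^ 2) ≤ ENNReal.ofReal (β * ‖f‖ ^ 2)) :
    spectrum ℂ A ⊆ {z : ℂ | ‖z‖ ≤ 1} ∧ ‖A‖ ≤ 1 := by
  haveI hnormal : IsStarNormal A := ⟨by
    rw [ContinuousLinearMap.star_eq_adjoint]
    exact hA⟩
  -- It suffices to prove the norm bound.
  suffices hnorm : ‖A‖ ≤ 1 by
    refine ⟨fun z hz => ?_, hnorm⟩
    rcases subsingleton_or_nontrivial H with hH | hH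
    · exact absurd hz (by
        simp only [spectrum.mem_iff, not_not]
        exact isUnit_of_subsingleton _)
    · exact le_trans (spectrum.norm_le_norm_of_mem hz) hnorm
  by_contra hA1
  push_neg at hA1
  haveI : Nontrivial H := by
    by_contra h
    rw [not_nontrivial_iff_subsingleton] at h
    have : A = 0 := Subsingleton.elim _ _
    rw [this, norm_zero] at hA1
    linarith
  -- find a spectral value of norm `‖A‖ > 1`
  obtain ⟨lam, hlam_mem, hlam⟩ := spectrum.exists_nnnorm_eq_spectralRadius (a := A)
  rw [IsStarNormal.spectralRadius_eq_nnnorm A] at hlam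
  have hlam_norm : ‖lam‖ = ‖A‖ := by
    have h : ‖lam‖₊ = ‖A‖₊ := by exact_mod_cast hlam
    exact congrArg ((↑) : NNReal → ℝ) h
  set r : ℝ := ‖lam‖ with hr
  have hr1 : 1 < r := by rw [hlam_norm]; exact hA1
  set s : ℝ := (1 + r) / 2 with hs_def
  have hs1 : 1 < s := by rw [hs_def]; linarith
  have hsr : s < r := by rw [hs_def]; linarith
  have hs0 : 0 ≤ s := by linarith
  -- bump function
  set φ : ℂ → ℂ := fun z => ((min 1 (max 0 ((‖z‖ - s) / (r - s))) : ℝ) : ℂ) with hφ_def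
  have hφc : Continuous φ := by
    apply Complex.continuous_ofReal.comp
    exact (continuous_const.min ((continuous_const.max
      ((continuous_norm.sub continuous_const).div_const _))))
  have hφ0 : ∀ z : ℂ, ‖z‖ < s → φ z = 0 := by
    intro z hz
    have h1 : (‖z‖ - s) / (r - s) ≤ 0 :=
      div_nonpos_of_nonpos_of_nonneg (by linarith) (by linarith)
    simp only [hφ_def]
    rw [max_eq_left h1, min_eq_right zero_le_one]
    simp
  have hφlam : φ lam = 1 := by
    simp only [hφ_def, ← hr]
    rw [div_self (by linarith : r - s ≠ 0), max_eq_right zero_le_one, min_self]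
    simp
  set C : H →L[ℂ] H := cfc φ A with hC_def
  -- C kills every g ∈ G
  have hCg : ∀ g ∈ G, C g = 0 := by
    intro g hg
    obtain ⟨β, hβ, hB⟩ := hBessel g hg
    -- the orbit is norm bounded
    have horbit : ∀ N : ℕ, ‖(A ^ N) g‖ ≤ β + 1 := by
      intro N
      have h1 := hB ((A ^ N) g)
      have h2 := ENNReal.le_tsum (f := fun n : ℕ =>
        (‖⟪(A ^ N) g, (A ^ n) g⟫_ℂ‖₊ : ℝ≥0∞) ^ 2) N
      have h3 : ((‖⟪(A ^ N) g, (A ^ N) g⟫_ℂ‖₊ : ℝ≥0∞)) ^ 2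
          ≤ ENNReal.ofReal (β * ‖(A ^ N) g‖ ^ 2) := le_trans h2 h1
      set a : ℝ := ‖(A ^ N) g‖ with ha_def
      have ha0 : 0 ≤ a := norm_nonneg _
      have hinner : ⟪(A ^ N) g, (A ^ N) g⟫_ℂ = ((a : ℂ)) ^ 2 :=
        inner_self_eq_norm_sq_to_K _
      have hnn : (‖⟪(A ^ N) g, (A ^ N) g⟫_ℂ‖₊ : ℝ≥0∞) = ENNReal.ofReal (a ^ 2) := by
        rw [hinner, ← enorm_eq_nnnorm, ← ofReal_norm]
        norm_num [abs_of_nonneg ha0]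
      rw [hnn, ← ENNReal.ofReal_pow (by positivity)] at h3
      have h4 : (a ^ 2) ^ 2 ≤ β * a ^ 2 :=
        (ENNReal.ofReal_le_ofReal_iff (by positivity)).mp h3
      nlinarith [sq_nonneg a, sq_nonneg (a - 1), sq_nonneg (a ^ 2 - β)]
    -- key inequality
    have hkey : ∀ N : ℕ, s ^ N * ‖C g‖ ≤ ‖C‖ * (β + 1) := by
      intro N
      have h1 := aux_key A φ hφc s hs0 hφ0 N g
      have h2 : cfc (fun z : ℂ => z ^ N * φ z) A = C * A ^ N := by
        have e1 : cfc (fun z : ℂ => z ^ N * φ z) A = A ^ N * C := by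
          rw [hC_def, cfc_mul _ _ A (continuous_pow N).continuousOn hφc.continuousOn,
            cfc_pow_id A N]
        have e2 : cfc (fun z : ℂ => z ^ N * φ z) A
            = cfc (fun z : ℂ => φ z * z ^ N) A :=
          cfc_congr fun z _ => mul_comm _ _
        have e3 : cfc (fun z : ℂ => φ z * z ^ N) A = C * A ^ N := by
          rw [hC_def, cfc_mul _ _ A hφc.continuousOn (continuous_pow N).continuousOn,
            cfc_pow_id A N]
        rw [e2, e3]
      rw [h2] at h1
      refine le_trans h1 ?_
      calc ‖(C * A ^ N) g‖ = ‖C ((A ^ N) g)‖ := by rw [ContinuousLinearMap.mul_apply]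
        _ ≤ ‖C‖ * ‖(A ^ N) g‖ := C.le_opNorm _
        _ ≤ ‖C‖ * (β + 1) := by
            have := horbit N
            have h0 : (0 : ℝ) ≤ ‖C‖ := norm_nonneg _
            nlinarith
    by_contra hne
    have hpos : 0 < ‖C g‖ := by
      rcases (norm_nonneg (C g)).lt_or_eq with h | h
      · exact h
      · exact absurd (norm_eq_zero.mp h.symm) hne
    obtain ⟨N, hN⟩ := pow_unbounded_of_one_lt (‖C‖ * (β + 1) / ‖C g‖) hs1
    have := hkey N
    rw [div_lt_iff₀ hpos] at hN
    linarith
  -- C vanishes on the dense span, hence is zero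
  have hCzero : C = 0 := by
    have hspan : Submodule.span ℂ
        (Set.range fun p : ↥G × ℕ => (A ^ p.2) (p.1 : H)) ≤ LinearMap.ker (C : H →ₗ[ℂ] H) := by
      rw [Submodule.span_le]
      rintro _ ⟨⟨⟨g, hg⟩, n⟩, rfl⟩
      simp only [SetLike.mem_coe, LinearMap.mem_ker, ContinuousLinearMap.coe_coe]
      have hcomm : C * A ^ n = A ^ n * C := by
        have e1 : cfc (fun z : ℂ => φ z * z ^ n) A = C * A ^ n := by
          rw [hC_def, cfc_mul _ _ A hφc.continuousOn (continuous_pow n).continuousOn,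
            cfc_pow_id A n]
        have e2 : cfc (fun z : ℂ => φ z * z ^ n) A
            = cfc (fun z : ℂ => z ^ n * φ z) A := cfc_congr fun z _ => mul_comm _ _
        have e3 : cfc (fun z : ℂ => z ^ n * φ z) A = A ^ n * C := by
          rw [hC_def, cfc_mul _ _ A (continuous_pow n).continuousOn hφc.continuousOn,
            cfc_pow_id A n]
        rw [← e1, e2, e3]
      have : C ((A ^ n) g) = (C * A ^ n) g := rfl
      rw [this, hcomm, ContinuousLinearMap.mul_apply, hCg g hg, map_zero]
    have hclos := Submodule.topologicalClosure_minimal _ hspan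
      (ContinuousLinearMap.isClosed_ker C)
    rw [hcomplete] at hclos
    refine ContinuousLinearMap.ext fun x => ?_
    have hx : x ∈ LinearMap.ker (C : H →ₗ[ℂ] H) := hclos Submodule.mem_top
    simpa using hx
  -- but 1 ∈ spectrum of C, contradiction
  have h1spec : (1 : ℂ) ∈ spectrum ℂ C := by
    rw [hC_def, cfc_map_spectrum φ A hnormal hφc.continuousOn]
    exact ⟨lam, hlam_mem, hφlam⟩
  rw [hCzero, spectrum.zero_eq] at h1spec
  exact one_ne_zero (Set.mem_singleton_iff.mp h1spec)
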